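/- Let G = (Q, T) be a d-dimensional VASS whose underlying directed graph is strongly connected and let t be a transition of G. Then Cyc(G/t) = Cyc(G), where Cyc(G/t) is the ℚ-vector space spanned by effects of cycles of G containing t, and Cyc(G) is the span of effects of all cycles. -/

import Mathlib

/-- A `d`-dimensional vector addition system with states: a finite set of
states (`Fin n`) and a finite set of transitions labelled by vectors in `ℤ^d`. -/
structure VASS (d : ℕ) where
  n : ℕ
  T : Finset (Fin n × (Fin d → ℤ) × Fin n)

namespace VASS

variable {d : ℕ}

abbrev Trans (G : VASS d) := Fin G.n × (Fin d → ℤ) × Fin G.n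

/-- `IsPathFrom G p q π` : the word of transitions `π` is a path of `G`
from state `p` to state `q`. -/
def IsPathFrom (G : VASS d) : Fin G.n → Fin G.n → List G.Trans → Prop
  | p, q, [] => p = q
  | p, q, t :: rest => t ∈ G.T ∧ t.1 = p ∧ IsPathFrom G t.2.2 q rest

/-- The effect of a path: the sum of the vectors on its transitions. -/
def effect {m : ℕ} (π : List (Fin m × (Fin d → ℤ) × Fin m)) : Fin d → ℤ :=
  (π.map fun t => t.2.1).sum

/-- The effect of a path, as a vector over `ℚ`. -/
def effectQ {m : ℕ} (π : List (Fin m × (Fin d → ℤ) × Fin m)) : Fin d → ℚ :=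
  fun i => ((effect π i : ℤ) : ℚ)

/-- The cycle space `Cyc(G)`: the `ℚ`-span of the effects of all cycles. -/
def Cyc (G : VASS d) : Submodule ℚ (Fin d → ℚ) :=
  Submodule.span ℚ {v | ∃ (q : Fin G.n) (π : List G.Trans), IsPathFrom G q q π ∧ v = effectQ π}

/-- `Cyc(G/t)`: the `ℚ`-span of the effects of all cycles containing `t`. -/
def CycThrough (G : VASS d) (t : G.Trans) : Submodule ℚ (Fin d → ℚ) :=
  Submodule.span ℚ
    {v | ∃ (q : Fin G.n) (π : List G.Trans), IsPathFrom G q q π ∧ t ∈ π ∧ v = effectQ π}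

/-- `G` is strongly connected if every state reaches every other via a path. -/
def StronglyConnected (G : VASS d) : Prop :=
  ∀ p q : Fin G.n, ∃ π : List G.Trans, IsPathFrom G p q π

end VASS

open VASS

lemma isPathFrom_append {d : ℕ} {G : VASS d} :
    ∀ {π : List G.Trans} {p q r : Fin G.n} {ρ : List G.Trans},
      IsPathFrom G p q π → IsPathFrom G q r ρ → IsPathFrom G p r (π ++ ρ)
  | [], p, q, r, ρ, h1, h2 => by
      cases h1; simpa using h2
  | s :: rest, p, q, r, ρ, h1, h2 => by
    obtain ⟨hs, hp, hrest⟩ := h1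
    exact ⟨hs, hp, isPathFrom_append hrest h2⟩

lemma effectQ_append {d m : ℕ} (π ρ : List (Fin m × (Fin d → ℤ) × Fin m)) :
    effectQ (π ++ ρ) = effectQ π + effectQ ρ := by
  funext i
  simp [effectQ, effect, List.map_append, List.sum_append]

lemma effectQ_cons {d m : ℕ} (s : Fin m × (Fin d → ℤ) × Fin m)
    (π : List (Fin m × (Fin d → ℤ) × Fin m)) :
    effectQ (s :: π) = (fun i => ((s.2.1 i : ℤ) : ℚ)) + effectQ π := by
  funext i
  simp [effectQ, effect]

/-- In a strongly connected VASS, the span of effects of cycles through any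
fixed transition equals the span of effects of all cycles. -/
theorem stmt11 {d : ℕ} (G : VASS d) (hsc : G.StronglyConnected)
    (t : G.Trans) (ht : t ∈ G.T) :
    G.CycThrough t = G.Cyc := by
  apply le_antisymm
  · apply Submodule.span_mono
    rintro v ⟨q, π, h1, _, h3⟩
    exact ⟨q, π, h1, h3⟩
  · rw [Cyc, Submodule.span_le]
    rintro v ⟨q, π, hπ, rfl⟩
    obtain ⟨ρ, hρ⟩ := hsc t.2.2 q
    obtain ⟨σ, hσ⟩ := hsc q t.1
    have hA : IsPathFrom G t.1 t.1 (t :: (ρ ++ (π ++ σ))) :=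
      ⟨ht, rfl, isPathFrom_append hρ (isPathFrom_append hπ hσ)⟩
    have hB : IsPathFrom G t.1 t.1 (t :: (ρ ++ σ)) :=
      ⟨ht, rfl, isPathFrom_append hρ hσ⟩
    have hAmem : effectQ (t :: (ρ ++ (π ++ σ))) ∈ G.CycThrough t :=
      Submodule.subset_span ⟨t.1, _, hA, List.mem_cons_self, rfl⟩
    have hBmem : effectQ (t :: (ρ ++ σ)) ∈ G.CycThrough t :=
      Submodule.subset_span ⟨t.1, _, hB, List.mem_cons_self, rfl⟩
    have key : effectQ π =
        effectQ (t :: (ρ ++ (π ++ σ))) - effectQ (t :: (ρ ++ σ)) := by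
      rw [effectQ_cons, effectQ_cons, effectQ_append, effectQ_append, effectQ_append]
      abel
    rw [key]
    exact Submodule.sub_mem _ hAmem hBmem
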